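/- Let ℓ and p be distinct primes and q ∈ ℚ_p^× with v_p(q) > 0. The group ℚ_p^×/q^ℤ contains an element of order ℓ if and only if p ≡ 1 (mod ℓ) or q is an ℓ-th power in ℚ_p^×. -/

import Mathlib

open Polynomial

/-- A nonnegative real with `x ^ n = 1`, `n ≠ 0`, equals 1. -/
lemma aux_pow_eq_one {x : ℝ} (hx : 0 ≤ x) {n : ℕ} (hn : n ≠ 0) (h : x ^ n = 1) : x = 1 := by
  rcases lt_trichotomy x 1 with h1 | h1 | h1
  · have := pow_lt_one₀ hx h1 hn
    rw [h] at this; exact absurd this (lt_irrefl 1)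
  · exact h1
  · have := one_lt_pow₀ h1 hn
    rw [h] at this; exact absurd this (lt_irrefl 1)

lemma aux_toZMod_zero {p : ℕ} [Fact p.Prime] (x : ℤ_[p]) :
    PadicInt.toZMod x = 0 ↔ ‖x‖ < 1 := by
  rw [show (PadicInt.toZMod x = 0) ↔ x ∈ RingHom.ker (PadicInt.toZMod (p := p)) from
    Iff.rfl, PadicInt.ker_toZMod, IsLocalRing.mem_maximalIdeal, mem_nonunits_iff,
    PadicInt.not_isUnit_iff]

/-- If `ℚ_p` contains a nontrivial `ℓ`-th root of unity with `ℓ ≠ p` prime, then `p ≡ 1 mod ℓ`. -/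
lemma aux_root_imp_mod (ℓ p : ℕ) (hℓ : ℓ.Prime) [hp : Fact p.Prime] (hne : ℓ ≠ p)
    (ζ : ℚ_[p]ˣ) (hζ : ζ ^ ℓ = 1) (hζ1 : ζ ≠ 1) : p % ℓ = 1 := by
  have hfact : Fact ℓ.Prime := ⟨hℓ⟩
  have hz : (ζ : ℚ_[p]) ^ ℓ = 1 := by
    have := congrArg (Units.val) hζ; push_cast at this; exact this
  have hznorm : ‖(ζ : ℚ_[p])‖ ≤ 1 := by
    have h1 : ‖(ζ : ℚ_[p])‖ ^ ℓ = 1 := by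
      rw [← norm_pow, hz, norm_one]
    exact (aux_pow_eq_one (norm_nonneg _) hℓ.pos.ne' h1).le
  set w : ℤ_[p] := ⟨(ζ : ℚ_[p]), hznorm⟩ with hwdef
  have hw : w ^ ℓ = 1 := by
    apply Subtype.ext
    push_cast [hwdef]
    exact hz
  have hw1 : w ≠ 1 := by
    intro h
    apply hζ1
    apply Units.ext
    have := congrArg (Subtype.val) h
    simpa [hwdef] using this
  set b : ZMod p := PadicInt.toZMod w with hbdef
  have hb : b ^ ℓ = 1 := by
    rw [hbdef, ← map_pow, hw, map_one]
  have hb1 : b ≠ 1 := by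
    intro h
    -- geometric sum argument
    have hsum : (∑ i ∈ Finset.range ℓ, w ^ i) * (w - 1) = 0 := by
      rw [geom_sum_mul, hw, sub_self]
    have hsum0 : (∑ i ∈ Finset.range ℓ, w ^ i) = 0 := by
      rcases mul_eq_zero.mp hsum with h' | h'
      · exact h'
      · exact absurd (sub_eq_zero.mp h') hw1
    have := congrArg (PadicInt.toZMod) hsum0
    rw [map_sum, map_zero] at this
    simp only [map_pow, ← hbdef, h, one_pow, Finset.sum_const, Finset.card_range,
      nsmul_eq_mul, mul_one] at this
    have : (p : ℕ) ∣ ℓ := (ZMod.natCast_eq_zero_iff ℓ p).mp this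
    exact hne ((Nat.prime_dvd_prime_iff_eq hp.out hℓ).mp this).symm
  have hb0 : b ≠ 0 := by
    intro h
    rw [h] at hb
    simp [zero_pow hℓ.pos.ne'] at hb
  have hord : orderOf b = ℓ := orderOf_eq_prime hb hb1
  have hpow : b ^ (p - 1) = 1 := ZMod.pow_card_sub_one_eq_one hb0
  have hdvd : ℓ ∣ p - 1 := hord ▸ orderOf_dvd_of_pow_eq_one hpow
  obtain ⟨k, hk⟩ := hdvd
  have hp2 : 2 ≤ p := hp.out.two_le
  have hpk : p = ℓ * k + 1 := by omega
  rw [hpk, Nat.mul_add_mod, Nat.mod_eq_of_lt hℓ.one_lt]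

/-- If `p ≡ 1 mod ℓ` then `ℚ_p` contains a nontrivial `ℓ`-th root of unity. -/
lemma aux_mod_imp_root (ℓ p : ℕ) (hℓ : ℓ.Prime) [hp : Fact p.Prime] (hne : ℓ ≠ p)
    (hmod : p % ℓ = 1) : ∃ ζ : ℚ_[p]ˣ, ζ ^ ℓ = 1 ∧ ζ ≠ 1 := by
  have hfact : Fact ℓ.Prime := ⟨hℓ⟩
  have hdvd : ℓ ∣ p - 1 := by
    have hp2 : 2 ≤ p := hp.out.two_le
    have := Nat.div_add_mod p ℓ
    refine ⟨p / ℓ, by omega⟩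
  -- find an element of order ℓ in (ZMod p)ˣ
  have hcard : ℓ ∣ Fintype.card (ZMod p)ˣ := by
    rwa [ZMod.card_units p]
  obtain ⟨bu, hbu⟩ := exists_prime_orderOf_dvd_card (G := (ZMod p)ˣ) ℓ hcard
  set b : ZMod p := (bu : ZMod p) with hbdef
  have hbℓ : b ^ ℓ = 1 := by
    have : bu ^ ℓ = 1 := by rw [← hbu]; exact pow_orderOf_eq_one bu
    have := congrArg (Units.val) this
    push_cast at this
    exact this
  have hb1 : b ≠ 1 := by
    intro h
    have : bu = 1 := Units.ext h
    rw [this, orderOf_one] at hbu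
    exact hℓ.one_lt.ne' hbu.symm
  have hb0 : b ≠ 0 := Units.ne_zero bu
  -- lift to ℤ_[p]
  set a : ℤ_[p] := (b.val : ℤ_[p]) with hadef
  have hta : PadicInt.toZMod a = b := by
    rw [hadef]
    simp [ZMod.natCast_val, ZMod.cast_id]
  set F : Polynomial ℤ_[p] := X ^ ℓ - 1 with hFdef
  have hevF : ∀ x : ℤ_[p], F.eval x = x ^ ℓ - 1 := by
    intro x; simp [hFdef]
  have hevF' : ∀ x : ℤ_[p], F.derivative.eval x = ℓ * x ^ (ℓ - 1) := by
    intro x; simp [hFdef, derivative_X_pow]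
  have hℓp : ((ℓ : ℕ) : ZMod p) ≠ 0 := by
    rw [Ne, ZMod.natCast_eq_zero_iff]
    intro h
    exact hne ((Nat.prime_dvd_prime_iff_eq hp.out hℓ).mp h).symm
  have hFa : ‖F.eval a‖ < 1 := by
    rw [← aux_toZMod_zero, hevF]
    rw [map_sub, map_pow, hta, map_one, hbℓ, sub_self]
  have hF'a : ‖F.derivative.eval a‖ = 1 := by
    have hu : PadicInt.toZMod (F.derivative.eval a) ≠ 0 := by
      rw [hevF', map_mul, map_pow, hta, map_natCast]
      exact mul_ne_zero hℓp (pow_ne_zero _ hb0)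
    rcases lt_or_eq_of_le (PadicInt.norm_le_one (F.derivative.eval a)) with h | h
    · exact absurd ((aux_toZMod_zero _).mpr h) hu
    · exact h
  have hnorm : ‖F.eval a‖ < ‖F.derivative.eval a‖ ^ 2 := by
    rw [hF'a]; simpa using hFa
  obtain ⟨z, hz0, hzdist, -, -⟩ := hensels_lemma hnorm
  rw [Polynomial.coe_aeval_eq_eval, hevF, sub_eq_zero] at hz0
  -- z reduces to b
  have htz : PadicInt.toZMod z = b := by
    have h0 : PadicInt.toZMod (z - a) = 0 := by
      rw [aux_toZMod_zero]
      rw [Polynomial.coe_aeval_eq_eval, hF'a] at hzdist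
      exact hzdist
    rw [map_sub, hta, sub_eq_zero] at h0
    exact h0
  have hz1 : z ≠ 1 := by
    intro h
    rw [h, map_one] at htz
    exact hb1 htz.symm
  have hzu : ‖z‖ = 1 := by
    have h1 : ‖(z : ℚ_[p])‖ ^ ℓ = 1 := by
      rw [← norm_pow, ← PadicInt.coe_pow, hz0, PadicInt.coe_one, norm_one]
    rw [PadicInt.norm_def]
    exact aux_pow_eq_one (norm_nonneg _) hℓ.pos.ne' h1
  have hzne : (z : ℚ_[p]) ≠ 0 := by
    intro h
    rw [show z = 0 from Subtype.ext h] at hzu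
    simp at hzu
  refine ⟨Units.mk0 (z : ℚ_[p]) hzne, ?_, ?_⟩
  · apply Units.ext
    push_cast
    have := congrArg (Subtype.val) hz0
    push_cast at this
    exact this
  · intro h
    apply hz1
    apply Subtype.ext
    have := congrArg (Units.val) h
    simpa using this

theorem stmt_14 (ℓ p : ℕ) (hℓ : ℓ.Prime) [Fact p.Prime] (hne : ℓ ≠ p)
    (q : ℚ_[p]ˣ) (hq : 0 < (q : ℚ_[p]).valuation) :
    (∃ x : ℚ_[p]ˣ ⧸ Subgroup.zpowers q, orderOf x = ℓ) ↔
      (p % ℓ = 1 ∨ ∃ y : ℚ_[p]ˣ, y ^ ℓ = q) := by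
  have hfact : Fact ℓ.Prime := ⟨hℓ⟩
  have hqne : (q : ℚ_[p]) ≠ 0 := Units.ne_zero q
  have hqnorm : ‖(q : ℚ_[p])‖ < 1 := by
    rw [Padic.norm_eq_zpow_neg_valuation hqne]
    apply zpow_lt_one_of_neg₀
    · exact_mod_cast (Fact.out : p.Prime).one_lt
    · omega
  have hqpos : (0:ℝ) < ‖(q : ℚ_[p])‖ := norm_pos_iff.mpr hqne
  -- injectivity of powers of q
  have hinj : ∀ a b : ℤ, q ^ a = q ^ b → a = b := by
    intro a b hab
    have h1 : ‖(q : ℚ_[p])‖ ^ a = ‖(q : ℚ_[p])‖ ^ b := by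
      have := congrArg (fun u : ℚ_[p]ˣ => ‖(u : ℚ_[p])‖) hab
      simpa [norm_zpow] using this
    exact zpow_right_injective₀ hqpos hqnorm.ne h1
  constructor
  · rintro ⟨x, hx⟩
    obtain ⟨u, rfl⟩ := QuotientGroup.mk_surjective x
    have hxℓ : (QuotientGroup.mk u : ℚ_[p]ˣ ⧸ Subgroup.zpowers q) ^ ℓ = 1 := by
      rw [← hx]; exact pow_orderOf_eq_one _
    rw [← QuotientGroup.mk_pow, QuotientGroup.eq_one_iff, Subgroup.mem_zpowers_iff] at hxℓ
    obtain ⟨m, hm⟩ := hxℓ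
    by_cases hdvd : (ℓ : ℤ) ∣ m
    · left
      obtain ⟨c, rfl⟩ := hdvd
      set ζ : ℚ_[p]ˣ := u * (q ^ c)⁻¹ with hζdef
      have hζℓ : ζ ^ ℓ = 1 := by
        rw [hζdef, mul_pow, ← hm, inv_pow, ← zpow_natCast (q ^ c), ← zpow_mul,
          mul_inv_eq_one, mul_comm c (ℓ:ℤ)]
      have hζ1 : ζ ≠ 1 := by
        intro h
        rw [hζdef, mul_inv_eq_one] at h
        have : (QuotientGroup.mk u : ℚ_[p]ˣ ⧸ Subgroup.zpowers q) = 1 := by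
          rw [QuotientGroup.eq_one_iff]
          exact h ▸ zpow_mem (Subgroup.mem_zpowers q) c
        rw [this, orderOf_one] at hx
        exact hℓ.one_lt.ne' hx.symm
      exact aux_root_imp_mod ℓ p hℓ hne ζ hζℓ hζ1
    · right
      have hℓZ : Prime (ℓ : ℤ) := Nat.prime_iff_prime_int.mp hℓ
      have hcop : IsCoprime (ℓ : ℤ) m := hℓZ.coprime_iff_not_dvd.mpr hdvd
      obtain ⟨a, b, hab⟩ := hcop
      refine ⟨q ^ a * u ^ b, ?_⟩
      have h2 : (u ^ b) ^ (ℓ:ℕ) = q ^ (m * b) := by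
        rw [← zpow_natCast (u ^ b), ← zpow_mul u b (ℓ:ℤ), mul_comm b (ℓ:ℤ),
          zpow_mul u (ℓ:ℤ) b, zpow_natCast u, ← hm, ← zpow_mul q m b]
      have h3 : (q ^ a) ^ (ℓ:ℕ) = q ^ (a * (ℓ:ℤ)) := by
        rw [← zpow_natCast (q ^ a), ← zpow_mul q a (ℓ:ℤ)]
      have key : (q ^ a * u ^ b) ^ (ℓ:ℕ) = q := by
        rw [mul_pow, h3, h2, ← zpow_add]
        conv_rhs => rw [show q = q ^ (1:ℤ) from (zpow_one q).symm]
        congr 1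
        linarith [hab]
      exact key
  · rintro (hmod | ⟨y, hy⟩)
    · obtain ⟨ζ, hζℓ, hζ1⟩ := aux_mod_imp_root ℓ p hℓ hne hmod
      refine ⟨QuotientGroup.mk ζ, ?_⟩
      apply orderOf_eq_prime
      · rw [← QuotientGroup.mk_pow, hζℓ]; rfl
      · rw [Ne, QuotientGroup.eq_one_iff, Subgroup.mem_zpowers_iff]
        rintro ⟨k, hk⟩
        have h1 : q ^ (k * ℓ) = q ^ (0:ℤ) := by
          rw [zpow_mul, hk, zpow_natCast, hζℓ, zpow_zero]
        have hk0 : k * (ℓ:ℤ) = 0 := hinj _ _ h1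
        have hk00 : k = 0 := by
          rcases mul_eq_zero.mp hk0 with h | h
          · exact h
          · exact absurd h (by exact_mod_cast hℓ.pos.ne')
        rw [hk00, zpow_zero] at hk
        exact hζ1 hk.symm
    · refine ⟨QuotientGroup.mk y, ?_⟩
      apply orderOf_eq_prime
      · rw [← QuotientGroup.mk_pow, hy, QuotientGroup.eq_one_iff]
        exact Subgroup.mem_zpowers q
      · rw [Ne, QuotientGroup.eq_one_iff, Subgroup.mem_zpowers_iff]
        rintro ⟨k, hk⟩
        have h1 : q ^ (k * ℓ) = q ^ (1:ℤ) := by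
          rw [zpow_mul, hk, zpow_natCast, hy, zpow_one]
        have h2 := hinj _ _ h1
        have h3 : IsUnit ((ℓ:ℤ)) := IsUnit.of_mul_eq_one (b := k) (by linarith [h2])
        have h4 := Int.isUnit_iff.mp h3
        have hℓ2 : 2 ≤ ℓ := hℓ.two_le
        omega
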